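/- Let N be a sum-GNN with L layers in which σ_ℓ is ReLU for each 1 ≤ ℓ ≤ L−1 and the co-domain of σ_L contains a number strictly less than the threshold t of the classification function cls_t. If channel p is unbounded at layer L, then every Datalog rule whose head atom mentions the unary predicate U_p is unsound for N; that is, for every such rule r there exists a dataset D with T_r(D) ⊄ T_N(D). -/

import Mathlib

/-! ## Sum-GNNs, the canonical encoding/decoding and transformation, and Datalog -/

/-- A fact over the GNN signature: a unary fact `U_p(a)` for a channel/unary predicate
`p : Fin δ`, or a binary fact `R^c(a,b)` for a colour/binary predicate `c : Col`.
Constants are modelled as natural numbers.  A dataset is a (finite) set of facts. -/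
inductive GFact (Col : Type) (δ : ℕ) : Type
  | unary (p : Fin δ) (a : ℕ)
  | binary (c : Col) (a b : ℕ)

/-- A sum-GNN with `L ≥ 1` layers over the colour set `Col`: layer `ℓ ∈ {1,…,L}` uses the
matrix `A ℓ` (of dimension `δ ℓ × δ (ℓ-1)`), the matrices `B c ℓ` for each colour `c`,
the bias vector `bias ℓ`, and the monotonically increasing activation function `act ℓ`
with non-negative range; `t` is the threshold of the step classification function
`cls_t`, which outputs `1` on input `x` iff `t ≤ x`.  Dimensions satisfy `δ L = δ 0`. -/
structure SumGNN (Col : Type) : Type where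
  L : ℕ
  hL : 1 ≤ L
  δ : ℕ → ℕ
  hδL : δ L = δ 0
  A : (ℓ : ℕ) → Fin (δ ℓ) → Fin (δ (ℓ - 1)) → ℝ
  B : Col → (ℓ : ℕ) → Fin (δ ℓ) → Fin (δ (ℓ - 1)) → ℝ
  bias : (ℓ : ℕ) → Fin (δ ℓ) → ℝ
  act : ℕ → ℝ → ℝ
  act_mono : ∀ ℓ, Monotone (act ℓ)
  act_nonneg : ∀ ℓ x, 0 ≤ act ℓ x
  t : ℝ

variable {Col : Type} {δ : ℕ}

open Classical

/-- The constants occurring in a fact. -/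
def GFact.constants : GFact Col δ → Set ℕ
  | .unary _ a => {a}
  | .binary _ a b => {a, b}

/-- The constants occurring in a dataset. -/
def constsOf (D : Set (GFact Col δ)) : Set ℕ := ⋃ f ∈ D, f.constants

/-- The real vector labelling the vertex `v_a` of the canonical encoding `enc D` of the
dataset `D` at layer `ℓ` when the sum-GNN `N` is applied to `enc D`:  at layer `0` it is
the Boolean labelling of `enc D` (channel `i` is `1` iff `U_i(a) ∈ D`), and at layer
`ℓ+1` it is `act (ℓ+1) (bias + A ·(previous vector) + Σ_c B^c ·(Σ_{c-neighbours} their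
previous vectors))`, computed componentwise. -/
noncomputable def gnnVal [Fintype Col] (N : SumGNN Col) (D : Set (GFact Col (N.δ 0))) :
    (ℓ : ℕ) → ℕ → Fin (N.δ ℓ) → ℝ
  | 0, a, i => if GFact.unary i a ∈ D then 1 else 0
  | (ℓ + 1), a, i =>
      N.act (ℓ + 1) (N.bias (ℓ + 1) i
        + (∑ j : Fin (N.δ ℓ), N.A (ℓ + 1) i j * gnnVal N D ℓ a j)
        + ∑ c : Col, ∑ j : Fin (N.δ ℓ),
            N.B c (ℓ + 1) i j * ∑ᶠ b ∈ {b : ℕ | GFact.binary c a b ∈ D}, gnnVal N D ℓ b j)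

/-- The canonical dataset transformation `T_N` induced by the sum-GNN `N`:
`T_N(D) = dec(N(enc(D)))`, i.e. it contains the unary fact `U_p(a)` for each constant
`a` of `D` and each channel `p` such that the classification function `cls_t` outputs
`1` on the `p`-th component of the layer-`L` vector of the vertex `v_a`. -/
def TN [Fintype Col] (N : SumGNN Col) (D : Set (GFact Col (N.δ 0))) :
    Set (GFact Col (N.δ 0)) :=
  { f | ∃ a ∈ constsOf D, ∃ p : Fin (N.δ 0),
      f = GFact.unary p a ∧ N.t ≤ gnnVal N D N.L a (Fin.cast N.hδL.symm p) }

/-! ### Datalog -/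

/-- A term: a variable or a constant (both drawn from countably infinite sets). -/
inductive DTerm : Type
  | var (x : ℕ)
  | const (a : ℕ)

/-- An atom over the GNN signature, possibly mentioning variables. -/
inductive DAtom (Col : Type) (δ : ℕ) : Type
  | unary (p : Fin δ) (t : DTerm)
  | binary (c : Col) (t₁ t₂ : DTerm)

/-- A body literal: an atom or an inequality `t₁ ≉ t₂`. -/
inductive DLit (Col : Type) (δ : ℕ) : Type
  | atom (a : DAtom Col δ)
  | neq (t₁ t₂ : DTerm)

/-- Applying a substitution (a map from variables to constants) to a term. -/
def DTerm.subst (ν : ℕ → ℕ) : DTerm → ℕ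
  | .var x => ν x
  | .const a => a

/-- Applying a substitution to an atom, producing a ground atom (a fact). -/
def DAtom.subst (ν : ℕ → ℕ) : DAtom Col δ → GFact Col δ
  | .unary p t => .unary p (t.subst ν)
  | .binary c t₁ t₂ => .binary c (t₁.subst ν) (t₂.subst ν)

/-- The variables of a term. -/
def DTerm.varList : DTerm → List ℕ
  | .var x => [x]
  | .const _ => []

/-- The variables of an atom. -/
def DAtom.varList : DAtom Col δ → List ℕ
  | .unary _ t => t.varList
  | .binary _ t₁ t₂ => t₁.varList ++ t₂.varList

/-- The variables of a literal. -/
def DLit.varList : DLit Col δ → List ℕ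
  | .atom a => a.varList
  | .neq t₁ t₂ => t₁.varList ++ t₂.varList

/-- A Datalog rule `B₁ ∧ … ∧ Bₙ → H`: each inequality in the body mentions two
different terms, and every variable of the rule occurs in some body atom. -/
structure DRule (Col : Type) (δ : ℕ) : Type where
  body : List (DLit Col δ)
  head : DAtom Col δ
  neq_distinct : ∀ t₁ t₂ : DTerm, DLit.neq t₁ t₂ ∈ body → t₁ ≠ t₂
  safe : ∀ x ∈ head.varList ++ body.flatMap DLit.varList,
      ∃ a : DAtom Col δ, DLit.atom a ∈ body ∧ x ∈ a.varList

/-- The variables of a rule, as a finite set. -/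
def DRule.varFinset (r : DRule Col δ) : Finset ℕ :=
  (r.head.varList ++ r.body.flatMap DLit.varList).toFinset

/-- Satisfaction of a ground literal in a dataset: `D ⊨ B` iff `B ∈ D` for a ground atom
`B`, and `D ⊨ a₁ ≉ a₂` iff `a₁ ≠ a₂`. -/
def DLit.sat (D : Set (GFact Col δ)) (ν : ℕ → ℕ) : DLit Col δ → Prop
  | .atom a => a.subst ν ∈ D
  | .neq t₁ t₂ => t₁.subst ν ≠ t₂.subst ν

/-- The immediate consequence operator `T_r` of a rule `r`: `T_r(D)` contains `Hν` for
each substitution `ν` such that `D ⊨ Bᵢν` for every body literal `Bᵢ`. -/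
def Tr (r : DRule Col δ) (D : Set (GFact Col δ)) : Set (GFact Col δ) :=
  { f | ∃ ν : ℕ → ℕ, (∀ B ∈ r.body, B.sat D ν) ∧ f = r.head.subst ν }

/-- The immediate consequence operator of a program: `T_P(D) = ⋃_{r ∈ P} T_r(D)`. -/
def TP (P : List (DRule Col δ)) (D : Set (GFact Col δ)) : Set (GFact Col δ) :=
  ⋃ r ∈ P, Tr r D

/-- The dataset `D_r^ν` consisting of `Bᵢν` for each body atom `Bᵢ` of the rule `r`. -/
def bodyDataset (r : DRule Col δ) (ν : ℕ → ℕ) : Set (GFact Col δ) :=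
  { f | ∃ a : DAtom Col δ, DLit.atom a ∈ r.body ∧ f = a.subst ν }

/-! ### Channel classification -/

/-- `Safe N ℓ i`: channel `i` is safe at layer `ℓ`.  Every channel is safe at layer `0`;
a channel `i` is safe at layer `ℓ+1` if the `i`-th row of `A (ℓ+1)` and of each
`B c (ℓ+1)` contains only non-negative values and the `j`-th entry of each such row is
zero for every `j` unsafe at layer `ℓ`. -/
def Safe (N : SumGNN Col) : (ℓ : ℕ) → Fin (N.δ ℓ) → Prop
  | 0, _ => True
  | (ℓ + 1), i =>
      (∀ j, 0 ≤ N.A (ℓ + 1) i j) ∧ (∀ c : Col, ∀ j, 0 ≤ N.B c (ℓ + 1) i j) ∧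
      (∀ j : Fin (N.δ ℓ), ¬ Safe N ℓ j →
        N.A (ℓ + 1) i j = 0 ∧ ∀ c : Col, N.B c (ℓ + 1) i j = 0)

/-- The classification of channel `i` at layer `ℓ` as a triple of propositions
`(stable, increasing, decreasing)`.  All channels are increasing (and neither stable nor
decreasing) at layer `0`; the classification at layer `ℓ+1` is as in the paper. -/
def chClass (N : SumGNN Col) : (ℓ : ℕ) → Fin (N.δ ℓ) → Prop × Prop × Prop
  | 0, _ => (False, True, False)
  | (ℓ + 1), i =>
      let St : Fin (N.δ ℓ) → Prop := fun j => (chClass N ℓ j).1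
      let Inc : Fin (N.δ ℓ) → Prop := fun j => (chClass N ℓ j).2.1
      let Dec : Fin (N.δ ℓ) → Prop := fun j => (chClass N ℓ j).2.2
      let Und : Fin (N.δ ℓ) → Prop := fun j => ¬ St j ∧ ¬ Inc j ∧ ¬ Dec j
      let stable : Prop :=
        (∀ c : Col, ∀ j, N.B c (ℓ + 1) i j = 0) ∧
        (∀ j, N.A (ℓ + 1) i j ≠ 0 → St j)
      let inc : Prop := ¬ stable ∧ ∀ j,
        (Inc j → 0 ≤ N.A (ℓ + 1) i j) ∧
        (Dec j → N.A (ℓ + 1) i j ≤ 0 ∧ ∀ c : Col, N.B c (ℓ + 1) i j = 0) ∧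
        (Und j → N.A (ℓ + 1) i j = 0 ∧ ∀ c : Col, N.B c (ℓ + 1) i j = 0) ∧
        (∀ c : Col, 0 ≤ N.B c (ℓ + 1) i j)
      let dec : Prop := ¬ stable ∧ ∀ j,
        (Inc j → N.A (ℓ + 1) i j ≤ 0) ∧
        (Dec j → 0 ≤ N.A (ℓ + 1) i j ∧ ∀ c : Col, N.B c (ℓ + 1) i j = 0) ∧
        (Und j → N.A (ℓ + 1) i j = 0 ∧ ∀ c : Col, N.B c (ℓ + 1) i j = 0) ∧
        (∀ c : Col, N.B c (ℓ + 1) i j ≤ 0)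
      (stable, inc, dec)

/-- Channel `i` is stable at layer `ℓ`. -/
def Stable (N : SumGNN Col) (ℓ : ℕ) (i : Fin (N.δ ℓ)) : Prop := (chClass N ℓ i).1

/-- Channel `i` is increasing at layer `ℓ`. -/
def Increasing (N : SumGNN Col) (ℓ : ℕ) (i : Fin (N.δ ℓ)) : Prop := (chClass N ℓ i).2.1

/-- Channel `i` is decreasing at layer `ℓ`. -/
def Decreasing (N : SumGNN Col) (ℓ : ℕ) (i : Fin (N.δ ℓ)) : Prop := (chClass N ℓ i).2.2

/-- Channel `i` is undetermined at layer `ℓ`: neither stable, increasing, nor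
decreasing. -/
def Undetermined (N : SumGNN Col) (ℓ : ℕ) (i : Fin (N.δ ℓ)) : Prop :=
  ¬ Stable N ℓ i ∧ ¬ Increasing N ℓ i ∧ ¬ Decreasing N ℓ i

/-- The sequence `y_ℓ := ReLU (B^{c_ℓ}_ℓ y_{ℓ-1})` (computed componentwise) from the
definition of unbounded channels, for the colour sequence `cs` and initial vector
`y0`. -/
noncomputable def ySeq (N : SumGNN Col) (cs : ℕ → Col) (y0 : Fin (N.δ 0) → ℝ) :
    (ℓ : ℕ) → Fin (N.δ ℓ) → ℝ
  | 0 => y0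
  | (ℓ + 1) => fun i =>
      max (∑ j : Fin (N.δ ℓ), N.B (cs (ℓ + 1)) (ℓ + 1) i j * ySeq N cs y0 ℓ j) 0

/-- Channel `p` is unbounded at layer `L`: there are a Boolean vector `y₀` of dimension
`δ 0` and colours `c₁, …, c_L` such that, with `y_ℓ := ReLU (B^{c_ℓ}_ℓ y_{ℓ-1})` for
`1 ≤ ℓ ≤ L-1`, the `p`-th component of `B^{c_L}_L y_{L-1}` is negative. -/
noncomputable def Unbounded (N : SumGNN Col) (p : Fin (N.δ N.L)) : Prop :=
  ∃ (y0 : Fin (N.δ 0) → ℝ) (cs : ℕ → Col),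
    (∀ k, y0 k = 0 ∨ y0 k = 1) ∧
    (∑ j : Fin (N.δ (N.L - 1)), N.B (cs N.L) N.L p j * ySeq N cs y0 (N.L - 1) j) < 0
namespace UnsoundAux
set_option linter.unusedSectionVars false
variable {Col : Type} [Fintype Col]

/-- pre-activation value at layer `ℓ ≥ 1`. -/
noncomputable def pre (N : SumGNN Col) (D : Set (GFact Col (N.δ 0))) (ℓ : ℕ) (a : ℕ)
    (i : Fin (N.δ ℓ)) : ℝ :=
  N.bias ℓ i + (∑ j : Fin (N.δ (ℓ - 1)), N.A ℓ i j * gnnVal N D (ℓ - 1) a j)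
    + ∑ c : Col, ∑ j : Fin (N.δ (ℓ - 1)),
        N.B c ℓ i j * ∑ᶠ b ∈ {b : ℕ | GFact.binary c a b ∈ D}, gnnVal N D (ℓ - 1) b j

lemma gnn_succ (N : SumGNN Col) (D : Set (GFact Col (N.δ 0))) (ℓ a : ℕ) (i : Fin (N.δ (ℓ+1))) :
    gnnVal N D (ℓ + 1) a i = N.act (ℓ + 1) (pre N D (ℓ + 1) a i) := rfl

lemma gnn_eq_pre (N : SumGNN Col) (D : Set (GFact Col (N.δ 0))) {ℓ : ℕ} (hℓ : 1 ≤ ℓ) (a : ℕ)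
    (i : Fin (N.δ ℓ)) : gnnVal N D ℓ a i = N.act ℓ (pre N D ℓ a i) := by
  obtain ⟨m, rfl⟩ : ∃ m, ℓ = m + 1 := ⟨ℓ - 1, by omega⟩
  rfl

lemma gnn_nonneg (N : SumGNN Col) (D : Set (GFact Col (N.δ 0))) (ℓ a : ℕ) (i : Fin (N.δ ℓ)) :
    0 ≤ gnnVal N D ℓ a i := by
  cases ℓ with
  | zero => simp only [gnnVal]; split <;> norm_num
  | succ m => exact N.act_nonneg _ _

end UnsoundAux
open Classical
namespace UnsoundAux
variable {Col : Type} [Fintype Col]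

/-! ### Generic helpers -/

lemma finsum_mem_eq_filter (s : Set ℕ) (T : Finset ℕ) (h : s ⊆ ↑T) (f : ℕ → ℝ) :
    ∑ᶠ b ∈ s, f b = ∑ b ∈ T.filter (· ∈ s), f b := by
  have hs : s = ↑(T.filter (· ∈ s)) := by
    ext b; simp only [Finset.coe_filter, Set.mem_setOf_eq]
    exact ⟨fun hb => ⟨h hb, hb⟩, fun hb => hb.2⟩
  conv_lhs => rw [hs]
  rw [finsum_mem_coe_finset]

lemma finsum_mem_bounds (s : Set ℕ) (T : Finset ℕ) (h : s ⊆ ↑T) (f : ℕ → ℝ) (C : ℝ)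
    (hf0 : ∀ b, 0 ≤ f b) (hfC : ∀ b, f b ≤ C) :
    0 ≤ (∑ᶠ b ∈ s, f b) ∧ (∑ᶠ b ∈ s, f b) ≤ T.card * C := by
  rw [finsum_mem_eq_filter s T h f]
  constructor
  · exact Finset.sum_nonneg fun b _ => hf0 b
  · calc ∑ b ∈ T.filter (· ∈ s), f b ≤ ∑ b ∈ T, f b :=
          Finset.sum_le_sum_of_subset_of_nonneg (Finset.filter_subset _ _)
            (fun b _ _ => hf0 b)
      _ ≤ T.card • C := Finset.sum_le_card_nsmul _ _ _ (fun b _ => hfC b)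
      _ = T.card * C := nsmul_eq_mul _ _

lemma mul_max0 (t x : ℝ) (ht : 0 ≤ t) : t * max x 0 = max (t * x) 0 := by
  rcases le_total x 0 with hx | hx
  · rw [max_eq_right hx, max_eq_right (by nlinarith), mul_zero]
  · rw [max_eq_left hx, max_eq_left (by nlinarith)]

lemma le_foldr_max (l : List ℕ) (a : ℕ) :
    (∀ x ∈ l, x ≤ l.foldr max a) ∧ a ≤ l.foldr max a := by
  induction l with
  | nil => simp
  | cons y l ih =>
    refine ⟨?_, le_trans ih.2 (le_max_right _ _)⟩
    intro x hx
    rcases List.mem_cons.mp hx with rfl | hx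
    · exact le_max_left _ _
    · exact le_trans (ih.1 x hx) (le_max_right _ _)

/-! ### Tower vertices -/

/-- tower vertex id: level `d` (1 ≤ d ≤ L), index `k < n`. -/
def tv (K n d k : ℕ) : ℕ := K + (d * n + k)

lemma tv_ge (K n d k : ℕ) : K ≤ tv K n d k := Nat.le_add_right _ _

lemma tv_ge' (K n d k : ℕ) (hd : 1 ≤ d) : K + n ≤ tv K n d k := by
  have : n ≤ d * n := Nat.le_mul_of_pos_left n hd
  unfold tv; omega

lemma tv_inj {K n d d' k k' : ℕ} (hk : k < n) (hk' : k' < n)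
    (h : tv K n d k = tv K n d' k') : d = d' ∧ k = k' := by
  unfold tv at h
  have h2 : d * n + k = d' * n + k' := by omega
  rcases Nat.lt_trichotomy d d' with h3 | h3 | h3
  · exfalso; have : (d + 1) * n ≤ d' * n := Nat.mul_le_mul_right n h3; nlinarith
  · constructor
    · exact h3
    · subst h3; omega
  · exfalso; have : (d' + 1) * n ≤ d * n := Nat.mul_le_mul_right n h3; nlinarith

/-! ### The tower dataset -/

/-- The tower attached to root `a`: levels `1, …, L` with `n` vertices each, complete
bipartite edges between consecutive levels, leaves (level `L`) labelled by `y0`. -/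
def towerSet (N : SumGNN Col) (cs : ℕ → Col) (y0 : Fin (N.δ 0) → ℝ) (a K n : ℕ) :
    Set (GFact Col (N.δ 0)) :=
  {f | ∃ i k, k < n ∧ y0 i = 1 ∧ f = .unary i (tv K n N.L k)} ∪
  {f | ∃ d k k', 1 ≤ d ∧ d + 1 ≤ N.L ∧ k < n ∧ k' < n ∧
      f = .binary (cs (N.L - d)) (tv K n d k) (tv K n (d + 1) k')} ∪
  {f | ∃ k, k < n ∧ f = .binary (cs N.L) a (tv K n 1 k)}

lemma towerSet_finite (N : SumGNN Col) (cs : ℕ → Col) (y0 : Fin (N.δ 0) → ℝ) (a K n : ℕ) :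
    (towerSet N cs y0 a K n).Finite := by
  refine (Set.Finite.union (Set.Finite.union ?_ ?_) ?_)
  · refine Set.Finite.subset (Set.Finite.image
      (f := fun q : Fin (N.δ 0) × ℕ => GFact.unary q.1 (tv K n N.L q.2))
      ((Set.finite_univ (α := Fin (N.δ 0))).prod (Set.finite_Iio n))) ?_
    rintro f ⟨i, k, hk, _, rfl⟩
    exact ⟨⟨i, k⟩, ⟨trivial, hk⟩, rfl⟩
  · refine Set.Finite.subset (Set.Finite.image
      (f := fun q : ℕ × ℕ × ℕ =>
        GFact.binary (cs (N.L - q.1)) (tv K n q.1 q.2.1) (tv K n (q.1 + 1) q.2.2))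
      ((Set.finite_Iic N.L).prod ((Set.finite_Iio n).prod (Set.finite_Iio n)))) ?_
    rintro f ⟨d, k, k', _, hd2, hk, hk', rfl⟩
    exact ⟨⟨d, k, k'⟩, ⟨by simpa using by omega, hk, hk'⟩, rfl⟩
  · refine Set.Finite.subset (Set.Finite.image
      (f := fun k : ℕ => GFact.binary (cs N.L) a (tv K n 1 k)) (Set.finite_Iio n)) ?_
    rintro f ⟨k, hk, rfl⟩
    exact ⟨k, hk, rfl⟩

end UnsoundAux
namespace UnsoundAux
set_option linter.unusedSectionVars false
variable {Col : Type} [Fintype Col]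

section Nbr

variable (N : SumGNN Col) (cs : ℕ → Col) (y0 : Fin (N.δ 0) → ℝ) (a K n : ℕ)
  (base : Set (GFact Col (N.δ 0)))
  (hbaseB : ∀ c u b, GFact.binary c u b ∈ base → u < K ∧ b < K)
  (ha : a < K) (hn : 1 ≤ n)

include hbaseB ha

lemma nbr_tv {c : Col} {d k : ℕ} (hd : 1 ≤ d) (hdL : d + 1 ≤ N.L) (hk : k < n) :
    {b : ℕ | GFact.binary c (tv K n d k) b ∈ base ∪ towerSet N cs y0 a K n} =
      if c = cs (N.L - d) then (↑((Finset.range n).image (tv K n (d + 1))) : Set ℕ) else ∅ := by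
  ext b
  simp only [Set.mem_setOf_eq, towerSet, Set.mem_union, Set.mem_setOf_eq]
  constructor
  · rintro (hb | ((⟨i, k', _, _, h⟩ | ⟨d', k'', k', hd', hd'2, hk'', hk', h⟩) | ⟨k', hk', h⟩))
    · exact absurd (hbaseB c _ b hb).1 (Nat.not_lt.mpr (tv_ge K n d k))
    · exact absurd h (by simp)
    · rw [GFact.binary.injEq] at h
      obtain ⟨hc, hsrc, rfl⟩ := h
      obtain ⟨rfl, rfl⟩ := tv_inj hk hk'' hsrc
      rw [if_pos hc]
      exact Finset.mem_coe.mpr (Finset.mem_image.mpr ⟨k', Finset.mem_range.mpr hk', rfl⟩)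
    · rw [GFact.binary.injEq] at h
      exact absurd h.2.1 (by have h1 := tv_ge K n d k; omega)
  · intro hb
    split at hb
    · rename_i hc
      obtain ⟨k', hk', rfl⟩ := Finset.mem_image.mp (Finset.mem_coe.mp hb)
      exact Or.inr (Or.inl (Or.inr ⟨d, k, k', hd, hdL, hk, Finset.mem_range.mp hk', by rw [hc]⟩))
    · exact absurd hb (Set.notMem_empty b)

lemma nbr_leaf {c : Col} {k : ℕ} (hk : k < n) :
    {b : ℕ | GFact.binary c (tv K n N.L k) b ∈ base ∪ towerSet N cs y0 a K n} = ∅ := by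
  ext b
  simp only [Set.mem_setOf_eq, towerSet, Set.mem_union, Set.mem_setOf_eq,
    Set.mem_empty_iff_false, iff_false]
  rintro (hb | ((⟨i, k', _, _, h⟩ | ⟨d', k'', k', hd', hd'2, hk'', hk', h⟩) | ⟨k', hk', h⟩))
  · exact absurd (hbaseB c _ b hb).1 (Nat.not_lt.mpr (tv_ge K n N.L k))
  · exact absurd h (by simp)
  · rw [GFact.binary.injEq] at h
    have := (tv_inj hk hk'' h.2.1).1
    omega
  · rw [GFact.binary.injEq] at h
    exact absurd h.2.1 (by have h1 := tv_ge K n N.L k; omega)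

lemma nbr_root {c : Col} :
    {b : ℕ | GFact.binary c a b ∈ base ∪ towerSet N cs y0 a K n} =
      {b : ℕ | GFact.binary c a b ∈ base} ∪
        (if c = cs N.L then (↑((Finset.range n).image (tv K n 1)) : Set ℕ) else ∅) := by
  ext b
  simp only [Set.mem_setOf_eq, towerSet, Set.mem_union, Set.mem_setOf_eq]
  constructor
  · rintro (hb | ((⟨i, k', _, _, h⟩ | ⟨d', k'', k', hd', hd'2, hk'', hk', h⟩) | ⟨k', hk', h⟩))
    · exact Or.inl hb
    · exact absurd h (by simp)
    · rw [GFact.binary.injEq] at h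
      exact absurd h.2.1 (by have h1 := tv_ge K n d' k''; omega)
    · rw [GFact.binary.injEq] at h
      obtain ⟨hc, -, rfl⟩ := h
      refine Or.inr ?_
      rw [if_pos hc]
      exact Finset.mem_coe.mpr (Finset.mem_image.mpr ⟨k', Finset.mem_range.mpr hk', rfl⟩)
  · rintro (hb | hb)
    · exact Or.inl hb
    · split at hb
      · rename_i hc
        obtain ⟨k', hk', rfl⟩ := Finset.mem_image.mp (Finset.mem_coe.mp hb)
        exact Or.inr (Or.inr ⟨k', Finset.mem_range.mp hk', by rw [hc]⟩)
      · exact absurd hb (Set.notMem_empty b)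

/-- every neighbour set is contained in `T₀ ∪ (tower vertices)`. -/
lemma nbr_subset (T₀ : Finset ℕ) (hT₀ : ∀ c u b, GFact.binary c u b ∈ base → b ∈ T₀)
    {c : Col} {u : ℕ} :
    {b : ℕ | GFact.binary c u b ∈ base ∪ towerSet N cs y0 a K n} ⊆
      ↑(T₀ ∪ (Finset.range (N.L * n + n)).image (K + ·)) := by
  rintro b (hb | ((⟨i, k', _, _, h⟩ | ⟨d', k'', k', hd', hd'2, hk'', hk', h⟩) | ⟨k', hk', h⟩))
  · simp only [Finset.coe_union, Set.mem_union, Finset.mem_coe]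
    exact Or.inl (hT₀ c u b hb)
  · exact absurd h (by simp)
  · rw [GFact.binary.injEq] at h
    obtain ⟨-, -, rfl⟩ := h
    simp only [Finset.coe_union, Set.mem_union, Finset.mem_coe]
    refine Or.inr (Finset.mem_image.mpr ⟨(d' + 1) * n + k', Finset.mem_range.mpr ?_, rfl⟩)
    have : (d' + 1) * n ≤ N.L * n := Nat.mul_le_mul_right n hd'2
    omega
  · rw [GFact.binary.injEq] at h
    obtain ⟨-, -, rfl⟩ := h
    simp only [Finset.coe_union, Set.mem_union, Finset.mem_coe]
    refine Or.inr (Finset.mem_image.mpr ⟨1 * n + k', Finset.mem_range.mpr ?_, rfl⟩)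
    have : 1 * n ≤ N.L * n := Nat.mul_le_mul_right n N.hL
    omega

/-- layer-0 value of a leaf. -/
lemma val0_leaf (hy0 : ∀ i, y0 i = 0 ∨ y0 i = 1)
    (hbaseU : ∀ i u, GFact.unary i u ∈ base → u < K) {k : ℕ} (hk : k < n)
    (i : Fin (N.δ 0)) :
    gnnVal N (base ∪ towerSet N cs y0 a K n) 0 (tv K n N.L k) i = y0 i := by
  have hmem : GFact.unary i (tv K n N.L k) ∈ base ∪ towerSet N cs y0 a K n ↔ y0 i = 1 := by
    simp only [towerSet, Set.mem_union, Set.mem_setOf_eq]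
    constructor
    · rintro (hb | ((⟨i', k', hk', hy', h⟩ | ⟨d', k'', k', hd', hd'2, hk'', hk', h⟩) | ⟨k', hk', h⟩))
      · exact absurd (hbaseU i _ hb) (by simpa using tv_ge K n N.L k)
      · rw [GFact.unary.injEq] at h
        obtain ⟨rfl, -⟩ := h
        exact hy'
      · exact absurd h (by simp)
      · exact absurd h (by simp)
    · intro hy
      exact Or.inr (Or.inl (Or.inl ⟨i, k, hk, hy, rfl⟩))
  simp only [gnnVal]
  rcases hy0 i with h0 | h0 <;> simp [hmem, h0]

end Nbr
end UnsoundAux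
namespace UnsoundAux
set_option linter.unusedSectionVars false
set_option maxHeartbeats 1000000
variable {Col : Type} [Fintype Col]

/-! ### Norm-type constants -/

noncomputable def btot (N : SumGNN Col) (ℓ : ℕ) : ℝ := ∑ i : Fin (N.δ ℓ), |N.bias ℓ i|

noncomputable def Atot (N : SumGNN Col) (ℓ : ℕ) : ℝ :=
  ∑ i : Fin (N.δ ℓ), ∑ j : Fin (N.δ (ℓ - 1)), |N.A ℓ i j|

noncomputable def Btot (N : SumGNN Col) (ℓ : ℕ) : ℝ :=
  ∑ c : Col, ∑ i : Fin (N.δ ℓ), ∑ j : Fin (N.δ (ℓ - 1)), |N.B c ℓ i j|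

lemma btot_nonneg (N : SumGNN Col) (ℓ : ℕ) : 0 ≤ btot N ℓ :=
  Finset.sum_nonneg fun _ _ => abs_nonneg _

lemma Atot_nonneg (N : SumGNN Col) (ℓ : ℕ) : 0 ≤ Atot N ℓ :=
  Finset.sum_nonneg fun _ _ => Finset.sum_nonneg fun _ _ => abs_nonneg _

lemma Btot_nonneg (N : SumGNN Col) (ℓ : ℕ) : 0 ≤ Btot N ℓ :=
  Finset.sum_nonneg fun _ _ => Finset.sum_nonneg fun _ _ =>
    Finset.sum_nonneg fun _ _ => abs_nonneg _

lemma le_btot (N : SumGNN Col) (ℓ : ℕ) (i : Fin (N.δ ℓ)) : |N.bias ℓ i| ≤ btot N ℓ :=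
  Finset.single_le_sum (f := fun i => |N.bias ℓ i|) (fun _ _ => abs_nonneg _)
    (Finset.mem_univ i)

lemma le_Atot (N : SumGNN Col) (ℓ : ℕ) (i : Fin (N.δ ℓ)) :
    ∑ j : Fin (N.δ (ℓ - 1)), |N.A ℓ i j| ≤ Atot N ℓ :=
  Finset.single_le_sum (f := fun i => ∑ j, |N.A ℓ i j|)
    (fun _ _ => Finset.sum_nonneg fun _ _ => abs_nonneg _) (Finset.mem_univ i)

lemma le_Btot' (N : SumGNN Col) (ℓ : ℕ) (i : Fin (N.δ ℓ)) :
    ∑ c : Col, ∑ j : Fin (N.δ (ℓ - 1)), |N.B c ℓ i j| ≤ Btot N ℓ :=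
  Finset.sum_le_sum fun c _ =>
    Finset.single_le_sum (f := fun i => ∑ j, |N.B c ℓ i j|)
      (fun _ _ => Finset.sum_nonneg fun _ _ => abs_nonneg _) (Finset.mem_univ i)

lemma le_Btot (N : SumGNN Col) (ℓ : ℕ) (c : Col) (i : Fin (N.δ ℓ)) :
    ∑ j : Fin (N.δ (ℓ - 1)), |N.B c ℓ i j| ≤ Btot N ℓ :=
  le_trans (Finset.single_le_sum (f := fun c => ∑ j, |N.B c ℓ i j|)
      (fun _ _ => Finset.sum_nonneg fun _ _ => abs_nonneg _) (Finset.mem_univ c))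
    (le_Btot' N ℓ i)

section Growth

variable (N : SumGNN Col) (cs : ℕ → Col) (y0 : Fin (N.δ 0) → ℝ) (a K : ℕ)
  (base : Set (GFact Col (N.δ 0))) (T₀ : Finset ℕ)
  (hbaseB : ∀ c u b, GFact.binary c u b ∈ base → u < K ∧ b < K) (ha : a < K)
  (hT₀ : ∀ c u b, GFact.binary c u b ∈ base → b ∈ T₀)
  (hrelu : ∀ ℓ : ℕ, 1 ≤ ℓ → ℓ ≤ N.L - 1 → N.act ℓ = fun x => max x 0)

include hbaseB ha hT₀ hrelu

lemma growth : ∀ ℓ : ℕ, ℓ ≤ N.L - 1 → ∃ C : ℝ, 0 ≤ C ∧ ∀ n : ℕ, 1 ≤ n → ∀ u : ℕ,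
    ∀ i : Fin (N.δ ℓ), gnnVal N (base ∪ towerSet N cs y0 a K n) ℓ u i ≤ C * (n : ℝ) ^ ℓ := by
  intro ℓ
  induction ℓ with
  | zero =>
    intro _
    refine ⟨1, zero_le_one, fun n hn u i => ?_⟩
    simp only [gnnVal, pow_zero, mul_one]
    split <;> norm_num
  | succ ℓ ih =>
    intro hℓ
    obtain ⟨C, hC0, hC⟩ := ih (by omega)
    set C₁ : ℝ := ((T₀.card : ℝ) + N.L + 1) * C with hC₁def
    have hC₁0 : 0 ≤ C₁ := mul_nonneg (by positivity) hC0
    refine ⟨btot N (ℓ + 1) + Atot N (ℓ + 1) * C + Btot N (ℓ + 1) * C₁,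
      add_nonneg (add_nonneg (btot_nonneg _ _) (mul_nonneg (Atot_nonneg _ _) hC0))
        (mul_nonneg (Btot_nonneg _ _) hC₁0), ?_⟩
    intro n hn u i
    have hn1 : (1 : ℝ) ≤ (n : ℝ) := by exact_mod_cast hn
    set D := base ∪ towerSet N cs y0 a K n with hD
    rw [gnn_succ, hrelu (ℓ + 1) (by omega) hℓ]
    set T : Finset ℕ := T₀ ∪ (Finset.range (N.L * n + n)).image (K + ·) with hT
    have hTcard : (T.card : ℝ) ≤ ((T₀.card : ℝ) + N.L + 1) * n := by
      have h1 : T.card ≤ T₀.card + (N.L * n + n) :=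
        le_trans (Finset.card_union_le _ _)
          (by gcongr; exact le_trans (Finset.card_image_le) (le_of_eq (Finset.card_range _)))
      have h2 : (T.card : ℝ) ≤ (T₀.card : ℝ) + (N.L * n + n) := by exact_mod_cast h1
      have h3 : ((N.L : ℝ) * n + n) ≤ ((N.L : ℝ) + 1) * n := by ring_nf; nlinarith
      nlinarith [show (0:ℝ) ≤ (T₀.card : ℝ) from Nat.cast_nonneg _]
    -- bounds on the finsums
    have hS : ∀ (c : Col) (j : Fin (N.δ ℓ)),
        0 ≤ (∑ᶠ b ∈ {b : ℕ | GFact.binary c u b ∈ D}, gnnVal N D ℓ b j) ∧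
        (∑ᶠ b ∈ {b : ℕ | GFact.binary c u b ∈ D}, gnnVal N D ℓ b j) ≤ C₁ * (n : ℝ) ^ (ℓ + 1) := by
      intro c j
      have hb := finsum_mem_bounds {b : ℕ | GFact.binary c u b ∈ D} T
        (nbr_subset N cs y0 a K n base hbaseB ha T₀ hT₀) (fun b => gnnVal N D ℓ b j) (C * (n : ℝ) ^ ℓ)
        (fun b => gnn_nonneg N D ℓ b j) (fun b => hC n hn b j)
      refine ⟨hb.1, le_trans hb.2 ?_⟩
      have hples : (0:ℝ) ≤ C * (n : ℝ) ^ ℓ := by positivity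
      calc (T.card : ℝ) * (C * (n : ℝ) ^ ℓ)
          ≤ (((T₀.card : ℝ) + N.L + 1) * n) * (C * (n : ℝ) ^ ℓ) := by gcongr
        _ = C₁ * (n : ℝ) ^ (ℓ + 1) := by rw [hC₁def, pow_succ]; ring
    -- main estimate
    have hvb : ∀ j : Fin (N.δ ℓ), 0 ≤ gnnVal N D ℓ u j ∧ gnnVal N D ℓ u j ≤ C * (n:ℝ)^ℓ :=
      fun j => ⟨gnn_nonneg N D ℓ u j, hC n hn u j⟩
    have habs : |pre N D (ℓ + 1) u i| ≤
        btot N (ℓ+1) + Atot N (ℓ+1) * (C * (n:ℝ)^ℓ) + Btot N (ℓ+1) * (C₁ * (n:ℝ)^(ℓ+1)) := by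
      unfold pre
      refine le_trans (abs_add_le _ _) ?_
      have h1 : |N.bias (ℓ+1) i + ∑ j : Fin (N.δ ℓ), N.A (ℓ+1) i j * gnnVal N D ℓ u j|
          ≤ btot N (ℓ+1) + Atot N (ℓ+1) * (C * (n:ℝ)^ℓ) := by
        refine le_trans (abs_add_le _ _) (add_le_add (le_btot N (ℓ+1) i) ?_)
        refine le_trans (Finset.abs_sum_le_sum_abs _ _) ?_
        calc ∑ j : Fin (N.δ ℓ), |N.A (ℓ+1) i j * gnnVal N D ℓ u j|
            ≤ ∑ j : Fin (N.δ ℓ), |N.A (ℓ+1) i j| * (C * (n:ℝ)^ℓ) := by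
              refine Finset.sum_le_sum fun j _ => ?_
              rw [abs_mul, abs_of_nonneg (hvb j).1]
              exact mul_le_mul_of_nonneg_left (hvb j).2 (abs_nonneg _)
          _ = (∑ j : Fin (N.δ ℓ), |N.A (ℓ+1) i j|) * (C * (n:ℝ)^ℓ) := by
              rw [Finset.sum_mul]
          _ ≤ Atot N (ℓ+1) * (C * (n:ℝ)^ℓ) := by
              refine mul_le_mul_of_nonneg_right (le_Atot N (ℓ+1) i) (by positivity)
      have h2 : |∑ c : Col, ∑ j : Fin (N.δ ℓ), N.B c (ℓ+1) i j *
            ∑ᶠ b ∈ {b : ℕ | GFact.binary c u b ∈ D}, gnnVal N D ℓ b j|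
          ≤ Btot N (ℓ+1) * (C₁ * (n:ℝ)^(ℓ+1)) := by
        refine le_trans (Finset.abs_sum_le_sum_abs _ _) ?_
        have : ∀ c : Col, |∑ j : Fin (N.δ ℓ), N.B c (ℓ+1) i j *
              ∑ᶠ b ∈ {b : ℕ | GFact.binary c u b ∈ D}, gnnVal N D ℓ b j|
            ≤ (∑ j : Fin (N.δ ℓ), |N.B c (ℓ+1) i j|) * (C₁ * (n:ℝ)^(ℓ+1)) := by
          intro c
          refine le_trans (Finset.abs_sum_le_sum_abs _ _) ?_
          rw [Finset.sum_mul]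
          refine Finset.sum_le_sum fun j _ => ?_
          rw [abs_mul, abs_of_nonneg (hS c j).1]
          exact mul_le_mul_of_nonneg_left (hS c j).2 (abs_nonneg _)
        calc ∑ c : Col, |∑ j : Fin (N.δ ℓ), N.B c (ℓ+1) i j *
              ∑ᶠ b ∈ {b : ℕ | GFact.binary c u b ∈ D}, gnnVal N D ℓ b j|
            ≤ ∑ c : Col, (∑ j : Fin (N.δ ℓ), |N.B c (ℓ+1) i j|) * (C₁ * (n:ℝ)^(ℓ+1)) :=
              Finset.sum_le_sum fun c _ => this c
          _ = (∑ c : Col, ∑ j : Fin (N.δ ℓ), |N.B c (ℓ+1) i j|) * (C₁ * (n:ℝ)^(ℓ+1)) := by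
              rw [Finset.sum_mul]
          _ ≤ Btot N (ℓ+1) * (C₁ * (n:ℝ)^(ℓ+1)) := by
              refine mul_le_mul_of_nonneg_right (le_Btot' N (ℓ+1) i) ?_
              exact mul_nonneg hC₁0 (by positivity)
      exact add_le_add h1 h2
    have hpow1 : (1:ℝ) ≤ (n:ℝ)^(ℓ+1) := one_le_pow₀ hn1
    have hpow2 : (n:ℝ)^ℓ ≤ (n:ℝ)^(ℓ+1) := pow_le_pow_right₀ hn1 (by omega)
    have := le_trans (max_le (le_abs_self _) (abs_nonneg _)) habs
    have hpos : (0:ℝ) ≤ (n:ℝ)^ℓ := by positivity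
    nlinarith [btot_nonneg N (ℓ+1), Atot_nonneg N (ℓ+1), Btot_nonneg N (ℓ+1),
      mul_le_mul_of_nonneg_left hpow2 (mul_nonneg (Atot_nonneg N (ℓ+1)) hC0),
      mul_le_mul_of_nonneg_left hpow1 (btot_nonneg N (ℓ+1))]

end Growth
end UnsoundAux
namespace UnsoundAux
set_option linter.unusedSectionVars false
set_option maxHeartbeats 1000000
variable {Col : Type} [Fintype Col]

section Tower

variable (N : SumGNN Col) (cs : ℕ → Col) (y0 : Fin (N.δ 0) → ℝ) (a K : ℕ)
  (base : Set (GFact Col (N.δ 0))) (T₀ : Finset ℕ)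
  (hbaseB : ∀ c u b, GFact.binary c u b ∈ base → u < K ∧ b < K) (ha : a < K)
  (hbaseU : ∀ i u, GFact.unary i u ∈ base → u < K)
  (hT₀ : ∀ c u b, GFact.binary c u b ∈ base → b ∈ T₀)
  (hy0 : ∀ i, y0 i = 0 ∨ y0 i = 1)
  (hrelu : ∀ ℓ : ℕ, 1 ≤ ℓ → ℓ ≤ N.L - 1 → N.act ℓ = fun x => max x 0)

include hbaseB ha hbaseU hT₀ hy0 hrelu

lemma tower : ∀ ℓ : ℕ, ℓ ≤ N.L - 1 → ∃ C : ℝ, 0 ≤ C ∧ ∀ n : ℕ, 1 ≤ n → ∀ k : ℕ, k < n →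
    ∀ i : Fin (N.δ ℓ),
    |gnnVal N (base ∪ towerSet N cs y0 a K n) ℓ (tv K n (N.L - ℓ) k) i
      - (n : ℝ) ^ ℓ * ySeq N cs y0 ℓ i| ≤ C * (n : ℝ) ^ ℓ / n := by
  intro ℓ
  induction ℓ with
  | zero =>
    intro _
    refine ⟨0, le_rfl, fun n hn k hk i => ?_⟩
    have hn0 : (0:ℝ) < (n:ℝ) := by exact_mod_cast hn
    rw [Nat.sub_zero, val0_leaf N cs y0 a K n base hbaseB ha hy0 hbaseU hk i]
    simp only [ySeq, pow_zero, one_mul, sub_self, abs_zero]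
    positivity
  | succ ℓ ih =>
    intro hℓ
    obtain ⟨C, hC0, hC⟩ := ih (by omega)
    obtain ⟨Cg, hCg0, hCg⟩ := growth N cs y0 a K base T₀ hbaseB ha hT₀ hrelu ℓ (by omega)
    refine ⟨btot N (ℓ + 1) + Atot N (ℓ + 1) * Cg + Btot N (ℓ + 1) * C,
      add_nonneg (add_nonneg (btot_nonneg _ _) (mul_nonneg (Atot_nonneg _ _) hCg0))
        (mul_nonneg (Btot_nonneg _ _) hC0), ?_⟩
    intro n hn k hk i
    have hn1 : (1 : ℝ) ≤ (n : ℝ) := by exact_mod_cast hn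
    have hn0 : (0:ℝ) < (n:ℝ) := by linarith
    set D := base ∪ towerSet N cs y0 a K n with hD
    set u := tv K n (N.L - (ℓ + 1)) k with hu
    have hd1 : 1 ≤ N.L - (ℓ + 1) := by omega
    have hd2 : (N.L - (ℓ + 1)) + 1 ≤ N.L := by omega
    have hd3 : N.L - (N.L - (ℓ + 1)) = ℓ + 1 := by omega
    have hd4 : (N.L - (ℓ + 1)) + 1 = N.L - ℓ := by omega
    -- neighbour structure of u
    have hnbr : ∀ c : Col, {b : ℕ | GFact.binary c u b ∈ D} =
        if c = cs (ℓ + 1) then (↑((Finset.range n).image (tv K n (N.L - ℓ))) : Set ℕ)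
        else ∅ := by
      intro c
      have h := nbr_tv N cs y0 a K n base hbaseB ha (c := c) hd1 hd2 hk
      rw [hd3, hd4] at h
      exact h
    -- the inner tower sums
    set S₀ : Fin (N.δ ℓ) → ℝ :=
      fun j => ∑ k' ∈ Finset.range n, gnnVal N D ℓ (tv K n (N.L - ℓ) k') j with hS₀
    have htvinj : ∀ x ∈ Finset.range n, ∀ y ∈ Finset.range n,
        tv K n (N.L - ℓ) x = tv K n (N.L - ℓ) y → x = y := by
      intro x hx y hy hxy
      exact (tv_inj (Finset.mem_range.mp hx) (Finset.mem_range.mp hy) hxy).2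
    have hSB : (∑ c : Col, ∑ j : Fin (N.δ ℓ), N.B c (ℓ + 1) i j *
          ∑ᶠ b ∈ {b : ℕ | GFact.binary c u b ∈ D}, gnnVal N D ℓ b j)
        = ∑ j : Fin (N.δ ℓ), N.B (cs (ℓ + 1)) (ℓ + 1) i j * S₀ j := by
      rw [Finset.sum_eq_single_of_mem (cs (ℓ + 1)) (Finset.mem_univ _)]
      · congr 1
        ext j
        congr 1
        rw [hnbr, if_pos rfl, finsum_mem_coe_finset, Finset.sum_image htvinj]
      · intro c _ hc
        rw [Finset.sum_eq_zero]
        intro j _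
        rw [hnbr, if_neg hc, finsum_mem_empty, mul_zero]
    -- error bound for the tower sums
    have hS0 : ∀ j : Fin (N.δ ℓ),
        |S₀ j - (n : ℝ) ^ (ℓ + 1) * ySeq N cs y0 ℓ j| ≤ C * (n : ℝ) ^ ℓ := by
      intro j
      have hconst : (n : ℝ) ^ (ℓ + 1) * ySeq N cs y0 ℓ j
          = ∑ _k' ∈ Finset.range n, (n : ℝ) ^ ℓ * ySeq N cs y0 ℓ j := by
        rw [Finset.sum_const, Finset.card_range, nsmul_eq_mul, pow_succ]
        ring
      rw [hconst, hS₀, ← Finset.sum_sub_distrib]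
      refine le_trans (Finset.abs_sum_le_sum_abs _ _) ?_
      calc ∑ k' ∈ Finset.range n,
            |gnnVal N D ℓ (tv K n (N.L - ℓ) k') j - (n : ℝ) ^ ℓ * ySeq N cs y0 ℓ j|
          ≤ ∑ _k' ∈ Finset.range n, C * (n : ℝ) ^ ℓ / n :=
            Finset.sum_le_sum fun k' hk' => hC n hn k' (Finset.mem_range.mp hk') j
        _ = n * (C * (n : ℝ) ^ ℓ / n) := by
            rw [Finset.sum_const, Finset.card_range, nsmul_eq_mul]
        _ = C * (n : ℝ) ^ ℓ := by field_simp
    -- growth bound for u itself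
    have hvb : ∀ j : Fin (N.δ ℓ), 0 ≤ gnnVal N D ℓ u j ∧ gnnVal N D ℓ u j ≤ Cg * (n:ℝ)^ℓ :=
      fun j => ⟨gnn_nonneg N D ℓ u j, hCg n hn u j⟩
    -- the target value
    have hQ : (n : ℝ) ^ (ℓ + 1) * ySeq N cs y0 (ℓ + 1) i =
        max ((n : ℝ) ^ (ℓ + 1) *
          ∑ j : Fin (N.δ ℓ), N.B (cs (ℓ + 1)) (ℓ + 1) i j * ySeq N cs y0 ℓ j) 0 := by
      simp only [ySeq]
      rw [mul_max0 _ _ (by positivity)]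
    rw [gnn_succ, hrelu (ℓ + 1) (by omega) hℓ, hQ]
    refine le_trans (abs_max_sub_max_le_abs _ _ _) ?_
    -- compare pre-activations
    have hPQ : pre N D (ℓ + 1) u i -
        (n : ℝ) ^ (ℓ + 1) * ∑ j : Fin (N.δ ℓ), N.B (cs (ℓ + 1)) (ℓ + 1) i j * ySeq N cs y0 ℓ j
        = N.bias (ℓ + 1) i + (∑ j : Fin (N.δ ℓ), N.A (ℓ + 1) i j * gnnVal N D ℓ u j)
          + ∑ j : Fin (N.δ ℓ), N.B (cs (ℓ + 1)) (ℓ + 1) i j *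
              (S₀ j - (n : ℝ) ^ (ℓ + 1) * ySeq N cs y0 ℓ j) := by
      have expand : ∑ j : Fin (N.δ ℓ), N.B (cs (ℓ + 1)) (ℓ + 1) i j *
            (S₀ j - (n : ℝ) ^ (ℓ + 1) * ySeq N cs y0 ℓ j)
          = (∑ j : Fin (N.δ ℓ), N.B (cs (ℓ + 1)) (ℓ + 1) i j * S₀ j)
            - (n : ℝ) ^ (ℓ + 1) * ∑ j : Fin (N.δ ℓ),
                N.B (cs (ℓ + 1)) (ℓ + 1) i j * ySeq N cs y0 ℓ j := by
        rw [Finset.mul_sum, ← Finset.sum_sub_distrib]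
        exact Finset.sum_congr rfl fun j _ => by ring
      have hpre : pre N D (ℓ + 1) u i = N.bias (ℓ + 1) i
          + (∑ j : Fin (N.δ ℓ), N.A (ℓ + 1) i j * gnnVal N D ℓ u j)
          + ∑ c : Col, ∑ j : Fin (N.δ ℓ), N.B c (ℓ + 1) i j *
              ∑ᶠ b ∈ {b : ℕ | GFact.binary c u b ∈ D}, gnnVal N D ℓ b j := rfl
      rw [hpre, hSB, expand]
      ring
    rw [hPQ]
    have h1 : |N.bias (ℓ + 1) i| ≤ btot N (ℓ + 1) := le_btot N (ℓ + 1) i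
    have h2 : |∑ j : Fin (N.δ ℓ), N.A (ℓ + 1) i j * gnnVal N D ℓ u j|
        ≤ Atot N (ℓ + 1) * (Cg * (n:ℝ)^ℓ) := by
      refine le_trans (Finset.abs_sum_le_sum_abs _ _) ?_
      calc ∑ j : Fin (N.δ ℓ), |N.A (ℓ+1) i j * gnnVal N D ℓ u j|
          ≤ ∑ j : Fin (N.δ ℓ), |N.A (ℓ+1) i j| * (Cg * (n:ℝ)^ℓ) := by
            refine Finset.sum_le_sum fun j _ => ?_
            rw [abs_mul, abs_of_nonneg (hvb j).1]
            exact mul_le_mul_of_nonneg_left (hvb j).2 (abs_nonneg _)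
        _ = (∑ j : Fin (N.δ ℓ), |N.A (ℓ+1) i j|) * (Cg * (n:ℝ)^ℓ) := by rw [Finset.sum_mul]
        _ ≤ Atot N (ℓ+1) * (Cg * (n:ℝ)^ℓ) :=
            mul_le_mul_of_nonneg_right (le_Atot N (ℓ+1) i) (by positivity)
    have h3 : |∑ j : Fin (N.δ ℓ), N.B (cs (ℓ + 1)) (ℓ + 1) i j *
          (S₀ j - (n : ℝ) ^ (ℓ + 1) * ySeq N cs y0 ℓ j)|
        ≤ Btot N (ℓ + 1) * (C * (n:ℝ)^ℓ) := by
      refine le_trans (Finset.abs_sum_le_sum_abs _ _) ?_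
      calc ∑ j : Fin (N.δ ℓ), |N.B (cs (ℓ+1)) (ℓ+1) i j *
            (S₀ j - (n : ℝ) ^ (ℓ + 1) * ySeq N cs y0 ℓ j)|
          ≤ ∑ j : Fin (N.δ ℓ), |N.B (cs (ℓ+1)) (ℓ+1) i j| * (C * (n:ℝ)^ℓ) := by
            refine Finset.sum_le_sum fun j _ => ?_
            rw [abs_mul]
            exact mul_le_mul_of_nonneg_left (hS0 j) (abs_nonneg _)
        _ = (∑ j : Fin (N.δ ℓ), |N.B (cs (ℓ+1)) (ℓ+1) i j|) * (C * (n:ℝ)^ℓ) := by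
            rw [Finset.sum_mul]
        _ ≤ Btot N (ℓ+1) * (C * (n:ℝ)^ℓ) :=
            mul_le_mul_of_nonneg_right (le_Btot N (ℓ+1) (cs (ℓ+1)) i) (by positivity)
    have habs := le_trans (abs_add_le _ _) (add_le_add (le_trans (abs_add_le _ _)
      (add_le_add h1 h2)) h3)
    have hrw : (btot N (ℓ + 1) + Atot N (ℓ + 1) * Cg + Btot N (ℓ + 1) * C)
        * (n : ℝ) ^ (ℓ + 1) / n
        = (btot N (ℓ + 1) + Atot N (ℓ + 1) * Cg + Btot N (ℓ + 1) * C) * (n : ℝ) ^ ℓ := by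
      rw [pow_succ]
      field_simp
    rw [hrw]
    have hpow1 : (1:ℝ) ≤ (n:ℝ)^ℓ := one_le_pow₀ hn1
    nlinarith [btot_nonneg N (ℓ+1), mul_le_mul_of_nonneg_left hpow1 (btot_nonneg N (ℓ+1))]

end Tower
end UnsoundAux
namespace UnsoundAux
set_option linter.unusedSectionVars false
set_option maxHeartbeats 1000000
variable {Col : Type} [Fintype Col]

section Root

variable (N : SumGNN Col) (cs : ℕ → Col) (y0 : Fin (N.δ 0) → ℝ) (a K : ℕ)
  (base : Set (GFact Col (N.δ 0))) (T₀ : Finset ℕ)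
  (hbaseB : ∀ c u b, GFact.binary c u b ∈ base → u < K ∧ b < K) (ha : a < K)
  (hbaseU : ∀ i u, GFact.unary i u ∈ base → u < K)
  (hT₀ : ∀ c u b, GFact.binary c u b ∈ base → b ∈ T₀)
  (hy0 : ∀ i, y0 i = 0 ∨ y0 i = 1)
  (hrelu : ∀ ℓ : ℕ, 1 ≤ ℓ → ℓ ≤ N.L - 1 → N.act ℓ = fun x => max x 0)

include hbaseB ha hbaseU hT₀ hy0 hrelu

lemma root (p : Fin (N.δ N.L)) : ∃ Cf : ℝ, 0 ≤ Cf ∧ ∀ n : ℕ, 1 ≤ n →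
    |pre N (base ∪ towerSet N cs y0 a K n) N.L a p
      - (n : ℝ) ^ N.L * (∑ j : Fin (N.δ (N.L - 1)),
          N.B (cs N.L) N.L p j * ySeq N cs y0 (N.L - 1) j)|
      ≤ Cf * (n : ℝ) ^ (N.L - 1) := by
  set ℓ := N.L - 1 with hℓdef
  have hL1 : ℓ + 1 = N.L := by have := N.hL; omega
  obtain ⟨Cg, hCg0, hCg⟩ := growth N cs y0 a K base T₀ hbaseB ha hT₀ hrelu ℓ le_rfl
  obtain ⟨Ct, hCt0, hCt⟩ := tower N cs y0 a K base T₀ hbaseB ha hbaseU hT₀ hy0 hrelu ℓ le_rfl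
  refine ⟨btot N N.L + Atot N N.L * Cg + Btot N N.L * ((T₀.card : ℝ) * Cg + Ct),
    add_nonneg (add_nonneg (btot_nonneg _ _) (mul_nonneg (Atot_nonneg _ _) hCg0))
      (mul_nonneg (Btot_nonneg _ _)
        (add_nonneg (mul_nonneg (Nat.cast_nonneg _) hCg0) hCt0)), ?_⟩
  intro n hn
  have hn1 : (1 : ℝ) ≤ (n : ℝ) := by exact_mod_cast hn
  have hn0 : (0 : ℝ) < (n : ℝ) := by linarith
  set D := base ∪ towerSet N cs y0 a K n with hD
  have htower1 : ∀ k' : ℕ, k' < n → ∀ j : Fin (N.δ ℓ),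
      |gnnVal N D ℓ (tv K n 1 k') j - (n : ℝ) ^ ℓ * ySeq N cs y0 ℓ j| ≤ Ct * (n:ℝ)^ℓ / n := by
    intro k' hk' j
    have h := hCt n hn k' hk' j
    rwa [Nat.sub_sub_self N.hL] at h
  -- split the neighbour finsums of the root
  have hsplit : ∀ (c : Col) (j : Fin (N.δ ℓ)),
      (∑ᶠ b ∈ {b : ℕ | GFact.binary c a b ∈ D}, gnnVal N D ℓ b j)
        = (∑ᶠ b ∈ {b : ℕ | GFact.binary c a b ∈ base}, gnnVal N D ℓ b j)
          + (if c = cs N.L then ∑ k' ∈ Finset.range n, gnnVal N D ℓ (tv K n 1 k') j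
             else 0) := by
    intro c j
    rw [hD, nbr_root N cs y0 a K n base hbaseB ha]
    by_cases hc : c = cs N.L
    · rw [if_pos hc, if_pos hc]
      have hdisj : Disjoint {b : ℕ | GFact.binary c a b ∈ base}
          (↑((Finset.range n).image (tv K n 1)) : Set ℕ) := by
        rw [Set.disjoint_left]
        rintro b hb hb'
        obtain ⟨k', _, rfl⟩ := Finset.mem_image.mp (Finset.mem_coe.mp hb')
        have h1 := (hbaseB c a _ hb).2
        have h2 := tv_ge K n 1 k'
        omega
      have hfin1 : {b : ℕ | GFact.binary c a b ∈ base}.Finite :=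
        Set.Finite.subset T₀.finite_toSet (fun b hb => hT₀ c a b hb)
      rw [finsum_mem_union hdisj hfin1 (Finset.finite_toSet _)]
      congr 1
      rw [finsum_mem_coe_finset, Finset.sum_image]
      intro x hx y hy hxy
      exact (tv_inj (Finset.mem_range.mp hx) (Finset.mem_range.mp hy) hxy).2
    · rw [if_neg hc, if_neg hc, Set.union_empty, add_zero]
  set S₀ : Fin (N.δ ℓ) → ℝ :=
    fun j => ∑ k' ∈ Finset.range n, gnnVal N D ℓ (tv K n 1 k') j with hS₀
  set Body : Col → Fin (N.δ ℓ) → ℝ :=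
    fun c j => ∑ᶠ b ∈ {b : ℕ | GFact.binary c a b ∈ base}, gnnVal N D ℓ b j with hBody
  have hBodyb : ∀ c j, 0 ≤ Body c j ∧ Body c j ≤ (T₀.card : ℝ) * (Cg * (n:ℝ)^ℓ) := by
    intro c j
    exact finsum_mem_bounds _ T₀ (fun b hb => hT₀ c a b hb) _ (Cg * (n:ℝ)^ℓ)
      (fun b => gnn_nonneg N D ℓ b j) (fun b => hCg n hn b j)
  have hSB : (∑ c : Col, ∑ j : Fin (N.δ ℓ), N.B c N.L p j *
        ∑ᶠ b ∈ {b : ℕ | GFact.binary c a b ∈ D}, gnnVal N D ℓ b j)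
      = (∑ c : Col, ∑ j : Fin (N.δ ℓ), N.B c N.L p j * Body c j)
        + ∑ j : Fin (N.δ ℓ), N.B (cs N.L) N.L p j * S₀ j := by
    have : ∀ c : Col, ∑ j : Fin (N.δ ℓ), N.B c N.L p j *
          (∑ᶠ b ∈ {b : ℕ | GFact.binary c a b ∈ D}, gnnVal N D ℓ b j)
        = ∑ j : Fin (N.δ ℓ), (N.B c N.L p j * Body c j
            + N.B c N.L p j * (if c = cs N.L then S₀ j else 0)) := by
      intro c
      refine Finset.sum_congr rfl fun j _ => ?_
      rw [hsplit c j, mul_add]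
    calc ∑ c : Col, ∑ j : Fin (N.δ ℓ), N.B c N.L p j *
          ∑ᶠ b ∈ {b : ℕ | GFact.binary c a b ∈ D}, gnnVal N D ℓ b j
        = ∑ c : Col, (∑ j : Fin (N.δ ℓ), N.B c N.L p j * Body c j
            + ∑ j : Fin (N.δ ℓ), N.B c N.L p j * (if c = cs N.L then S₀ j else 0)) := by
          refine Finset.sum_congr rfl fun c _ => ?_
          rw [this c, Finset.sum_add_distrib]
      _ = (∑ c : Col, ∑ j : Fin (N.δ ℓ), N.B c N.L p j * Body c j)
            + ∑ c : Col, ∑ j : Fin (N.δ ℓ), N.B c N.L p j *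
                (if c = cs N.L then S₀ j else 0) := Finset.sum_add_distrib
      _ = (∑ c : Col, ∑ j : Fin (N.δ ℓ), N.B c N.L p j * Body c j)
            + ∑ j : Fin (N.δ ℓ), N.B (cs N.L) N.L p j * S₀ j := by
          congr 1
          rw [Finset.sum_eq_single_of_mem (cs N.L) (Finset.mem_univ _)]
          · exact Finset.sum_congr rfl fun j _ => by rw [if_pos rfl]
          · intro c _ hc
            exact Finset.sum_eq_zero fun j _ => by rw [if_neg hc, mul_zero]
  -- error bound on the tower sums
  have hS0 : ∀ j : Fin (N.δ ℓ),
      |S₀ j - (n : ℝ) ^ N.L * ySeq N cs y0 ℓ j| ≤ Ct * (n : ℝ) ^ ℓ := by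
    intro j
    have hconst : (n : ℝ) ^ N.L * ySeq N cs y0 ℓ j
        = ∑ _k' ∈ Finset.range n, (n : ℝ) ^ ℓ * ySeq N cs y0 ℓ j := by
      rw [Finset.sum_const, Finset.card_range, nsmul_eq_mul, ← hL1, pow_succ]
      ring
    rw [hconst, hS₀, ← Finset.sum_sub_distrib]
    refine le_trans (Finset.abs_sum_le_sum_abs _ _) ?_
    calc ∑ k' ∈ Finset.range n,
          |gnnVal N D ℓ (tv K n 1 k') j - (n : ℝ) ^ ℓ * ySeq N cs y0 ℓ j|
        ≤ ∑ _k' ∈ Finset.range n, Ct * (n : ℝ) ^ ℓ / n :=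
          Finset.sum_le_sum fun k' hk' => htower1 k' (Finset.mem_range.mp hk') j
      _ = n * (Ct * (n : ℝ) ^ ℓ / n) := by
          rw [Finset.sum_const, Finset.card_range, nsmul_eq_mul]
      _ = Ct * (n : ℝ) ^ ℓ := by field_simp
  have hvb : ∀ j : Fin (N.δ ℓ), 0 ≤ gnnVal N D ℓ a j ∧ gnnVal N D ℓ a j ≤ Cg * (n:ℝ)^ℓ :=
    fun j => ⟨gnn_nonneg N D ℓ a j, hCg n hn a j⟩
  -- expand pre
  have expand : ∑ j : Fin (N.δ ℓ), N.B (cs N.L) N.L p j *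
        (S₀ j - (n : ℝ) ^ N.L * ySeq N cs y0 ℓ j)
      = (∑ j : Fin (N.δ ℓ), N.B (cs N.L) N.L p j * S₀ j)
        - (n : ℝ) ^ N.L * ∑ j : Fin (N.δ ℓ), N.B (cs N.L) N.L p j * ySeq N cs y0 ℓ j := by
    rw [Finset.mul_sum, ← Finset.sum_sub_distrib]
    exact Finset.sum_congr rfl fun j _ => by ring
  have hpre : pre N D N.L a p = N.bias N.L p
      + (∑ j : Fin (N.δ ℓ), N.A N.L p j * gnnVal N D ℓ a j)
      + ∑ c : Col, ∑ j : Fin (N.δ ℓ), N.B c N.L p j *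
          ∑ᶠ b ∈ {b : ℕ | GFact.binary c a b ∈ D}, gnnVal N D ℓ b j := rfl
  have hPQ : pre N D N.L a p - (n : ℝ) ^ N.L * (∑ j : Fin (N.δ ℓ),
        N.B (cs N.L) N.L p j * ySeq N cs y0 ℓ j)
      = N.bias N.L p + (∑ j : Fin (N.δ ℓ), N.A N.L p j * gnnVal N D ℓ a j)
        + (∑ c : Col, ∑ j : Fin (N.δ ℓ), N.B c N.L p j * Body c j)
        + ∑ j : Fin (N.δ ℓ), N.B (cs N.L) N.L p j *
            (S₀ j - (n : ℝ) ^ N.L * ySeq N cs y0 ℓ j) := by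
    rw [hpre, hSB, expand]
    ring
  rw [hPQ]
  have h1 : |N.bias N.L p| ≤ btot N N.L := le_btot N N.L p
  have h2 : |∑ j : Fin (N.δ ℓ), N.A N.L p j * gnnVal N D ℓ a j|
      ≤ Atot N N.L * (Cg * (n:ℝ)^ℓ) := by
    refine le_trans (Finset.abs_sum_le_sum_abs _ _) ?_
    calc ∑ j : Fin (N.δ ℓ), |N.A N.L p j * gnnVal N D ℓ a j|
        ≤ ∑ j : Fin (N.δ ℓ), |N.A N.L p j| * (Cg * (n:ℝ)^ℓ) := by
          refine Finset.sum_le_sum fun j _ => ?_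
          rw [abs_mul, abs_of_nonneg (hvb j).1]
          exact mul_le_mul_of_nonneg_left (hvb j).2 (abs_nonneg _)
      _ = (∑ j : Fin (N.δ ℓ), |N.A N.L p j|) * (Cg * (n:ℝ)^ℓ) := by rw [Finset.sum_mul]
      _ ≤ Atot N N.L * (Cg * (n:ℝ)^ℓ) :=
          mul_le_mul_of_nonneg_right (le_Atot N N.L p) (by positivity)
  have h3 : |∑ c : Col, ∑ j : Fin (N.δ ℓ), N.B c N.L p j * Body c j|
      ≤ Btot N N.L * ((T₀.card : ℝ) * (Cg * (n:ℝ)^ℓ)) := by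
    refine le_trans (Finset.abs_sum_le_sum_abs _ _) ?_
    have hb : ∀ c : Col, |∑ j : Fin (N.δ ℓ), N.B c N.L p j * Body c j|
        ≤ (∑ j : Fin (N.δ ℓ), |N.B c N.L p j|) * ((T₀.card : ℝ) * (Cg * (n:ℝ)^ℓ)) := by
      intro c
      refine le_trans (Finset.abs_sum_le_sum_abs _ _) ?_
      rw [Finset.sum_mul]
      refine Finset.sum_le_sum fun j _ => ?_
      rw [abs_mul, abs_of_nonneg (hBodyb c j).1]
      exact mul_le_mul_of_nonneg_left (hBodyb c j).2 (abs_nonneg _)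
    calc ∑ c : Col, |∑ j : Fin (N.δ ℓ), N.B c N.L p j * Body c j|
        ≤ ∑ c : Col, (∑ j : Fin (N.δ ℓ), |N.B c N.L p j|)
            * ((T₀.card : ℝ) * (Cg * (n:ℝ)^ℓ)) := Finset.sum_le_sum fun c _ => hb c
      _ = (∑ c : Col, ∑ j : Fin (N.δ ℓ), |N.B c N.L p j|)
            * ((T₀.card : ℝ) * (Cg * (n:ℝ)^ℓ)) := by rw [Finset.sum_mul]
      _ ≤ Btot N N.L * ((T₀.card : ℝ) * (Cg * (n:ℝ)^ℓ)) := by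
          refine mul_le_mul_of_nonneg_right (le_Btot' N N.L p) ?_
          positivity
  have h4 : |∑ j : Fin (N.δ ℓ), N.B (cs N.L) N.L p j *
        (S₀ j - (n : ℝ) ^ N.L * ySeq N cs y0 ℓ j)|
      ≤ Btot N N.L * (Ct * (n:ℝ)^ℓ) := by
    refine le_trans (Finset.abs_sum_le_sum_abs _ _) ?_
    calc ∑ j : Fin (N.δ ℓ), |N.B (cs N.L) N.L p j *
          (S₀ j - (n : ℝ) ^ N.L * ySeq N cs y0 ℓ j)|
        ≤ ∑ j : Fin (N.δ ℓ), |N.B (cs N.L) N.L p j| * (Ct * (n:ℝ)^ℓ) := by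
          refine Finset.sum_le_sum fun j _ => ?_
          rw [abs_mul]
          exact mul_le_mul_of_nonneg_left (hS0 j) (abs_nonneg _)
      _ = (∑ j : Fin (N.δ ℓ), |N.B (cs N.L) N.L p j|) * (Ct * (n:ℝ)^ℓ) := by
          rw [Finset.sum_mul]
      _ ≤ Btot N N.L * (Ct * (n:ℝ)^ℓ) :=
          mul_le_mul_of_nonneg_right (le_Btot N N.L (cs N.L) p) (by positivity)
  have habs := le_trans (abs_add_le _ _) (add_le_add (le_trans (abs_add_le _ _)
    (add_le_add (le_trans (abs_add_le _ _) (add_le_add h1 h2)) h3)) h4)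
  have hpow1 : (1:ℝ) ≤ (n:ℝ)^ℓ := one_le_pow₀ hn1
  nlinarith [btot_nonneg N N.L, mul_le_mul_of_nonneg_left hpow1 (btot_nonneg N N.L)]

end Root
end UnsoundAux
namespace UnsoundAux
set_option linter.unusedSectionVars false
set_option maxHeartbeats 1000000
variable {Col : Type} {δ : ℕ}

/-- The terms of an atom. -/
def atomTerms : DAtom Col δ → List DTerm
  | .unary _ t => [t]
  | .binary _ t₁ t₂ => [t₁, t₂]

/-- The terms of a literal. -/
def litTerms : DLit Col δ → List DTerm
  | .atom a => atomTerms a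
  | .neq t₁ t₂ => [t₁, t₂]

/-- The constant of a term (0 for variables). -/
def constVal : DTerm → ℕ
  | .var _ => 0
  | .const a => a

lemma bodyDataset_finite (r : DRule Col δ) (ν : ℕ → ℕ) : (bodyDataset r ν).Finite := by
  have hsub : bodyDataset r ν ⊆ (fun atm => DAtom.subst ν atm) '' {atm | DLit.atom atm ∈ r.body} :=
    fun f ⟨atm, h1, h2⟩ => ⟨atm, h1, h2.symm⟩
  refine Set.Finite.subset (Set.Finite.image _ ?_) hsub
  have : {atm : DAtom Col δ | DLit.atom atm ∈ r.body} = DLit.atom ⁻¹' {l | l ∈ r.body} := rfl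
  rw [this]
  exact Set.Finite.preimage (fun x _ y _ h => by injection h) (List.finite_toSet r.body)

end UnsoundAux


open UnsoundAux

/-- Let `N` be a sum-GNN whose activation functions are ReLU in all
layers `1 ≤ ℓ ≤ L-1` and whose last activation's co-domain contains a number strictly
below the classification threshold `t`.  If channel `p` is unbounded at layer `L`, then
every rule whose head mentions the unary predicate `U_p` is unsound for `N`: there is a
dataset `D` with `T_r(D) ⊄ T_N(D)`. -/
theorem unbounded_unsound {Col : Type} [Fintype Col] (N : SumGNN Col)
    (hrelu : ∀ ℓ : ℕ, 1 ≤ ℓ → ℓ ≤ N.L - 1 → N.act ℓ = fun x => max x 0)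
    (hcod : ∃ x : ℝ, N.act N.L x < N.t)
    (p : Fin (N.δ 0)) (hp : Unbounded N (Fin.cast N.hδL.symm p)) :
    ∀ r : DRule Col (N.δ 0), (∃ tm : DTerm, r.head = DAtom.unary p tm) →
      ∃ D : Set (GFact Col (N.δ 0)), D.Finite ∧ ¬ Tr r D ⊆ TN N D := by
  classical
  rintro r ⟨tm, hhead⟩
  obtain ⟨y0, cs, hy0, hneg⟩ := hp
  obtain ⟨x, hx⟩ := hcod
  -- rule constants and the substitution
  set allT : List DTerm := atomTerms r.head ++ r.body.flatMap litTerms with hallT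
  set C₀ : ℕ := (allT.map constVal).foldr max 0 + 1 with hC₀
  set ν : ℕ → ℕ := fun z => C₀ + z with hν
  have hconst : ∀ t ∈ allT, constVal t < C₀ := by
    intro t ht
    have := (le_foldr_max ((allT.map constVal)) 0).1 (constVal t) (List.mem_map_of_mem ht)
    omega
  set base := bodyDataset r ν with hbase
  set V : List ℕ := (r.body.flatMap litTerms).map (DTerm.subst ν) with hV
  set a := DTerm.subst ν tm with hadef
  set K := ((a :: V).foldr max 0) + 1 with hK
  set T₀ := (a :: V).toFinset with hT₀def
  have hVK : ∀ z ∈ a :: V, z < K := by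
    intro z hz
    have := (le_foldr_max (a :: V) 0).1 z hz
    omega
  have haK : a < K := hVK a (List.mem_cons_self)
  have hlitval : ∀ l ∈ r.body, ∀ t ∈ litTerms l, DTerm.subst ν t ∈ V := by
    intro l hl t ht
    exact List.mem_map_of_mem (List.mem_flatMap.mpr ⟨l, hl, ht⟩)
  -- properties of the body dataset
  have hbaseB : ∀ c u b, GFact.binary c u b ∈ base → u < K ∧ b < K := by
    rintro c u b ⟨atm, hat, heq⟩
    cases atm with
    | unary q t => exact absurd heq (by simp [DAtom.subst])
    | binary c' t₁ t₂ =>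
      rw [DAtom.subst, GFact.binary.injEq] at heq
      obtain ⟨rfl, rfl, rfl⟩ := heq
      constructor
      · exact hVK _ (List.mem_cons_of_mem _
          (hlitval _ hat t₁ (by simp [litTerms, atomTerms])))
      · exact hVK _ (List.mem_cons_of_mem _
          (hlitval _ hat t₂ (by simp [litTerms, atomTerms])))
  have hbaseU : ∀ i u, GFact.unary i u ∈ base → u < K := by
    rintro i u ⟨atm, hat, heq⟩
    cases atm with
    | binary c' t₁ t₂ => exact absurd heq (by simp [DAtom.subst])
    | unary q t =>
      rw [DAtom.subst, GFact.unary.injEq] at heq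
      obtain ⟨rfl, rfl⟩ := heq
      exact hVK _ (List.mem_cons_of_mem _ (hlitval _ hat t (by simp [litTerms, atomTerms])))
  have hT₀ : ∀ c u b, GFact.binary c u b ∈ base → b ∈ T₀ := by
    rintro c u b ⟨atm, hat, heq⟩
    cases atm with
    | unary q t => exact absurd heq (by simp [DAtom.subst])
    | binary c' t₁ t₂ =>
      rw [DAtom.subst, GFact.binary.injEq] at heq
      obtain ⟨rfl, rfl, rfl⟩ := heq
      exact List.mem_toFinset.mpr (List.mem_cons_of_mem _
        (hlitval _ hat t₂ (by simp [litTerms, atomTerms])))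
  -- the substitution satisfies all inequality literals
  have hneq : ∀ t₁ t₂ : DTerm, DLit.neq t₁ t₂ ∈ r.body →
      DTerm.subst ν t₁ ≠ DTerm.subst ν t₂ := by
    intro t₁ t₂ hmem
    have hdist := r.neq_distinct t₁ t₂ hmem
    have ht₁ : t₁ ∈ allT := List.mem_append_right _
      (List.mem_flatMap.mpr ⟨_, hmem, by simp [litTerms]⟩)
    have ht₂ : t₂ ∈ allT := List.mem_append_right _
      (List.mem_flatMap.mpr ⟨_, hmem, by simp [litTerms]⟩)
    cases t₁ with
    | var z₁ =>
      cases t₂ with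
      | var z₂ =>
        have : z₁ ≠ z₂ := fun h => hdist (by rw [h])
        simp only [DTerm.subst, hν]
        omega
      | const b₂ =>
        have := hconst _ ht₂
        simp only [constVal] at this
        simp only [DTerm.subst, hν]
        omega
    | const b₁ =>
      cases t₂ with
      | var z₂ =>
        have := hconst _ ht₁
        simp only [constVal] at this
        simp only [DTerm.subst, hν]
        omega
      | const b₂ =>
        have : b₁ ≠ b₂ := fun h => hdist (by rw [h])
        simpa only [DTerm.subst] using this
  -- root estimate
  set pc : Fin (N.δ N.L) := Fin.cast N.hδL.symm p with hpc
  set S : ℝ := ∑ j : Fin (N.δ (N.L - 1)), N.B (cs N.L) N.L pc j * ySeq N cs y0 (N.L - 1) j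
    with hS
  obtain ⟨Cf, hCf0, hCf⟩ := root N cs y0 a K base T₀ hbaseB haK hbaseU hT₀ hy0 hrelu pc
  -- choose n large enough
  obtain ⟨m, hm⟩ := exists_nat_ge ((Cf + |x| + 1) / (-S))
  set n : ℕ := m + 1 with hn
  have hn1 : 1 ≤ n := by omega
  have hnR : ((Cf + |x| + 1) / (-S)) ≤ (n : ℝ) := by
    refine le_trans hm ?_
    exact_mod_cast Nat.le_succ m
  have hSneg : S < 0 := hneg
  have hnS : (n : ℝ) * S + Cf ≤ -(|x| + 1) := by
    have h0 : 0 < -S := by linarith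
    rw [div_le_iff₀ h0] at hnR
    nlinarith
  set D : Set (GFact Col (N.δ 0)) := base ∪ towerSet N cs y0 a K n with hDdef
  have hnr1 : (1 : ℝ) ≤ (n : ℝ) := by exact_mod_cast hn1
  have hpow1 : (1:ℝ) ≤ (n:ℝ) ^ (N.L - 1) := one_le_pow₀ hnr1
  have hpowL : (n:ℝ) ^ N.L = (n:ℝ) ^ (N.L - 1) * n := by
    rw [← pow_succ]
    congr 1
    have := N.hL
    omega
  -- the value atm the root is below the threshold
  have hprelt : pre N D N.L a pc ≤ x := by
    have h := hCf n hn1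
    have h2 : pre N D N.L a pc ≤ (n:ℝ)^N.L * S + Cf * (n:ℝ)^(N.L-1) := by
      have := abs_le.mp h
      linarith [this.2]
    have h3 : (n:ℝ)^N.L * S + Cf * (n:ℝ)^(N.L-1) = ((n:ℝ)*S + Cf) * (n:ℝ)^(N.L-1) := by
      rw [hpowL]; ring
    rw [h3] at h2
    have h4 : ((n:ℝ)*S + Cf) * (n:ℝ)^(N.L-1) ≤ ((n:ℝ)*S + Cf) * 1 := by
      apply mul_le_mul_of_nonpos_left hpow1 ?_
      linarith [abs_nonneg x]
    have h5 : -(|x| + 1) ≤ x := by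
      have := neg_abs_le x
      linarith
    nlinarith
  have hvallt : gnnVal N D N.L a pc < N.t := by
    rw [gnn_eq_pre N D N.hL a pc]
    calc N.act N.L (pre N D N.L a pc) ≤ N.act N.L x := N.act_mono N.L hprelt
      _ < N.t := hx
  -- assemble
  refine ⟨D, Set.Finite.union (bodyDataset_finite r ν) (towerSet_finite N cs y0 a K n), ?_⟩
  intro hsub
  have hfTr : GFact.unary p a ∈ Tr r D := by
    refine ⟨ν, ?_, by rw [hhead]; rfl⟩
    intro B hB
    cases B with
    | atom atm => exact Or.inl ⟨atm, hB, rfl⟩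
    | neq t₁ t₂ => exact hneq t₁ t₂ hB
  obtain ⟨a', _, p', hfeq, hval⟩ := hsub hfTr
  rw [GFact.unary.injEq] at hfeq
  obtain ⟨rfl, rfl⟩ := hfeq
  exact absurd hval (not_le.mpr hvallt)
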